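/- Derivative of flow utility under a general normalization (Corollary 1): Let Q_a and Q_A be X×X real matrices, let p_A, p_a ∈ ℝ^X have all entries in (0,1), let π̄_A ∈ ℝ^X be a fixed vector, and let β ∈ ℝ be such that I_X − βQ_A is invertible. Define π_a(t) := (I_X − tQ_a)(I_X − tQ_A)⁻¹(π̄_A − log p_A) + log p_a, where log is applied componentwise. Then π_a is differentiable at β with derivative ∂π_a/∂β = −[Q_a(I_X − βQ_A)⁻¹ − (I_X − βQ_A)⁻¹Q_A](I_X − βQ_A)⁻¹(π̄_A − log p_A). -/

import Mathlib

attribute [local instance] Matrix.linftyOpNormedRing Matrix.linftyOpNormedAlgebra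

theorem stmt_5 (X : ℕ) (Qa QA : Matrix (Fin X) (Fin X) ℝ)
    (pA pa : Fin X → ℝ) (πbarA : Fin X → ℝ)
    (hpA : ∀ x, pA x ∈ Set.Ioo (0 : ℝ) 1)
    (hpa : ∀ x, pa x ∈ Set.Ioo (0 : ℝ) 1)
    (β : ℝ)
    (hinv : IsUnit ((1 : Matrix (Fin X) (Fin X) ℝ) - β • QA)) :
    HasDerivAt
      (fun t : ℝ =>
        (((1 : Matrix (Fin X) (Fin X) ℝ) - t • Qa) * (1 - t • QA)⁻¹).mulVec
            (fun x => πbarA x - Real.log (pA x))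
          + fun x => Real.log (pa x))
      ((-((Qa * (1 - β • QA)⁻¹ - (1 - β • QA)⁻¹ * QA) * (1 - β • QA)⁻¹)).mulVec
        (fun x => πbarA x - Real.log (pA x))) β := by
  set g : Matrix (Fin X) (Fin X) ℝ := (1 - β • QA)⁻¹ with hg
  set v : Fin X → ℝ := fun x => πbarA x - Real.log (pA x) with hv
  let L : Matrix (Fin X) (Fin X) ℝ →L[ℝ] (Fin X → ℝ) :=
    LinearMap.toContinuousLinearMap
      { toFun := fun M => M.mulVec v
        map_add' := fun A B => Matrix.add_mulVec A B v
        map_smul' := fun c A => Matrix.smul_mulVec c A v }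
  have hM : HasDerivAt (fun t : ℝ => (1 : Matrix (Fin X) (Fin X) ℝ) - t • QA) (-QA) β := by
    have h := ((hasDerivAt_id β).smul_const QA).const_sub (1 : Matrix (Fin X) (Fin X) ℝ)
    simp only [id, one_smul] at h
    exact h
  have hA : HasDerivAt (fun t : ℝ => (1 : Matrix (Fin X) (Fin X) ℝ) - t • Qa) (-Qa) β := by
    have h := ((hasDerivAt_id β).smul_const Qa).const_sub (1 : Matrix (Fin X) (Fin X) ℝ)
    simp only [id, one_smul] at h
    exact h
  obtain ⟨u, hu⟩ := hinv
  have hgu : g = ↑u⁻¹ := by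
    rw [hg, Matrix.nonsing_inv_eq_ringInverse, ← hu, Ring.inverse_unit]
  have hinvder : HasDerivAt (fun t : ℝ => Ring.inverse ((1 : Matrix (Fin X) (Fin X) ℝ) - t • QA))
      (g * QA * g) β := by
    have h1 := (hasFDerivAt_ringInverse (𝕜 := ℝ) u)
    rw [hu] at h1
    have h2 := h1.comp_hasDerivAt β hM
    convert h2 using 1
    iterate 4 rfl
    simp [ContinuousLinearMap.mulLeftRight_apply, hgu, mul_assoc]
  have hF : HasDerivAt (fun t : ℝ =>
      ((1 : Matrix (Fin X) (Fin X) ℝ) - t • Qa) * (1 - t • QA)⁻¹)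
      ((-Qa) * g + (1 - β • Qa) * (g * QA * g)) β := by
    have h := hA.mul hinvder
    simp only [hg, Matrix.nonsing_inv_eq_ringInverse] at h ⊢
    exact h
  have hdet : IsUnit ((1 - β • QA).det) := (Matrix.isUnit_iff_isUnit_det _).mp ⟨u, hu⟩
  have hmul : (1 - β • QA) * g = 1 := Matrix.mul_nonsing_inv _ hdet
  have hg1 : g = 1 + β • (QA * g) := by
    have h := hmul
    rw [sub_mul, one_mul, Matrix.smul_mul] at h
    have := congrArg (fun M => M + β • (QA * g)) h
    simpa [sub_add_cancel] using this
  have key : Qa * (g * g) = Qa * g + β • (Qa * (g * (QA * g))) := by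
    nth_rewrite 2 [hg1]
    simp [mul_add, mul_one, mul_smul_comm, mul_assoc]
  have hDeq : (-Qa) * g + (1 - β • Qa) * (g * QA * g)
      = -((Qa * g - g * QA) * g) := by
    simp only [sub_mul, one_mul, Matrix.smul_mul, smul_mul_assoc, neg_mul, mul_assoc, neg_sub]
    rw [key]
    abel
  rw [← hDeq]
  have hcomp := (L.hasFDerivAt.comp_hasDerivAt β hF).add_const (fun x => Real.log (pa x))
  convert hcomp using 2 <;> rfl
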